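/- (Proposition 1.) Fix 0 ≤ α < 1 and set h = 0 in the Hamiltonian of the context. For every τ > 0, δ > 0 and C > 0 there exists n₀ such that for every odd N = 2m+1 > n₀, every diagonal matrix D with ρ = U D U, every choice of real coefficients a_1,…,a_N with A = ∑_i a_i σ_i^x satisfying |Tr(A ρ)| ≤ C, and every t with |t| ≤ τ, one has |Tr(exp(−i t H) · A · exp(i t H) · ρ) − Tr(A ρ)| < δ. -/

import Mathlib

open Matrix

/-- Coupling constants `ε(j) = j^{−α}`. -/
noncomputable def eps (α : ℝ) (j : ℕ) : ℝ := (j : ℝ) ^ (-α)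

/-- Kac normalization `𝒩_α = (2 ∑_{j=1}^{m} ε(j))⁻¹` for the odd ring `N = 2m+1`. -/
noncomputable def kacNorm (α : ℝ) (m : ℕ) : ℝ :=
  (2 * ∑ j ∈ Finset.Icc 1 m, eps α j)⁻¹

/-- `σ_i^z`: diagonal matrix with entry `(−1)^{s i}` at configuration `s : Fin (2m+1) → Bool`. -/
noncomputable def sigmaZ (m : ℕ) (i : Fin (2 * m + 1)) :
    Matrix (Fin (2 * m + 1) → Bool) (Fin (2 * m + 1) → Bool) ℂ :=
  Matrix.diagonal fun s => if s i then -1 else 1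

/-- `σ_i^x`: permutation matrix flipping the `i`-th bit. -/
noncomputable def sigmaX (m : ℕ) (i : Fin (2 * m + 1)) :
    Matrix (Fin (2 * m + 1) → Bool) (Fin (2 * m + 1) → Bool) ℂ :=
  fun s s' => if s' = Function.update s i (! s i) then 1 else 0

/-- `U`: the `N`-fold Kronecker product of the Hadamard matrix `(1/√2)[[1,1],[1,−1]]`. -/
noncomputable def hadamardU (m : ℕ) :
    Matrix (Fin (2 * m + 1) → Bool) (Fin (2 * m + 1) → Bool) ℂ :=
  fun s s' => ∏ i : Fin (2 * m + 1),
    (((Real.sqrt 2)⁻¹ : ℝ) : ℂ) * (if s i && s' i then -1 else 1)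

open Fin.NatCast in
/-- Emch–Radin Hamiltonian
`H = 𝒩_α ∑_{i=1}^N ∑_{j=1}^m ε(j) σ_i^z σ_{(i+j) mod N}^z − h ∑_i σ_i^z` on the odd ring
`N = 2m+1` (indices mod `N`). -/
noncomputable def Ham (α h : ℝ) (m : ℕ) :
    Matrix (Fin (2 * m + 1) → Bool) (Fin (2 * m + 1) → Bool) ℂ :=
  ((kacNorm α m : ℝ) : ℂ) • ∑ i : Fin (2 * m + 1), ∑ j ∈ Finset.Icc 1 m,
      ((eps α j : ℝ) : ℂ) • (sigmaZ m i * sigmaZ m (i + (j : Fin (2 * m + 1))))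
    - ((h : ℝ) : ℂ) • ∑ i : Fin (2 * m + 1), sigmaZ m i

namespace ER

open Fin.NatCast Fin.CommRing

variable {m : ℕ}
def zs (s : Fin (2 * m + 1) → Bool) (i : Fin (2 * m + 1)) : ℝ := if s i then -1 else 1
noncomputable def Er (α : ℝ) (m : ℕ) (s : Fin (2 * m + 1) → Bool) : ℝ :=
  kacNorm α m * ∑ i : Fin (2 * m + 1), ∑ j ∈ Finset.Icc 1 m,
    eps α j * (zs s i * zs s (i + (j : Fin (2 * m + 1))))
lemma sigmaZ_mul (i i' : Fin (2 * m + 1)) :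
    sigmaZ m i * sigmaZ m i' = Matrix.diagonal (fun s => ((zs s i * zs s i' : ℝ) : ℂ)) := by
  rw [sigmaZ, sigmaZ, Matrix.diagonal_mul_diagonal]
  ext s s'
  rcases eq_or_ne s s' with h | h
  · subst h
    simp only [Matrix.diagonal_apply_eq, zs]
    split_ifs <;> norm_num
  · simp [Matrix.diagonal_apply_ne _ h]

lemma ham_diag (α : ℝ) (m : ℕ) :
    Ham α 0 m = Matrix.diagonal (fun s => ((Er α m s : ℝ) : ℂ)) := by
  unfold Ham Er
  simp only [Complex.ofReal_zero, zero_smul, sub_zero, sigmaZ_mul]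
  ext s s'
  rcases eq_or_ne s s' with h | h
  · subst h
    simp only [Matrix.smul_apply, Matrix.sum_apply, Matrix.diagonal_apply_eq, smul_eq_mul]
    push_cast
    ring
  · simp [Matrix.smul_apply, Matrix.sum_apply, Matrix.diagonal_apply_ne _ h]

lemma exp_ham (α : ℝ) (m : ℕ) (c : ℂ) :
    NormedSpace.exp (c • Ham α 0 m)
      = Matrix.diagonal (fun s => Complex.exp (c * ((Er α m s : ℝ) : ℂ))) := by
  rw [ham_diag, ← Matrix.diagonal_smul, Matrix.exp_diagonal, Pi.exp_def]
  exact congrArg Matrix.diagonal (funext fun s => by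
    rw [Pi.smul_apply, smul_eq_mul, ← Complex.exp_eq_exp_ℂ])

def flip (k : Fin (2 * m + 1)) (s : Fin (2 * m + 1) → Bool) : Fin (2 * m + 1) → Bool :=
  Function.update s k (!s k)

lemma flip_self (k : Fin (2 * m + 1)) (s : Fin (2 * m + 1) → Bool) : flip k s k = !s k := by
  simp [flip]

lemma flip_ne {i k : Fin (2 * m + 1)} (h : i ≠ k) (s : Fin (2 * m + 1) → Bool) :
    flip k s i = s i := by
  simp [flip, Function.update_of_ne h]

lemma zs_flip_self (k : Fin (2 * m + 1)) (s : Fin (2 * m + 1) → Bool) :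
    zs (flip k s) k = -zs s k := by
  simp only [zs, flip_self]; cases s k <;> norm_num

lemma zs_flip_ne {i k : Fin (2 * m + 1)} (h : i ≠ k) (s : Fin (2 * m + 1) → Bool) :
    zs (flip k s) i = zs s i := by
  simp only [zs, flip_ne h]

lemma cast_ne_zero {j : ℕ} (h1 : 1 ≤ j) (h2 : j ≤ m) : ((j : Fin (2 * m + 1))) ≠ 0 := by
  have hlt : j < 2 * m + 1 := by omega
  intro h
  have := congrArg Fin.val h
  rw [Fin.val_cast_of_lt hlt] at this
  simp at this
  omega

lemma add_cast_ne (k : Fin (2 * m + 1)) {j : ℕ} (h1 : 1 ≤ j) (h2 : j ≤ m) :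
    k + (j : Fin (2 * m + 1)) ≠ k := by
  intro h
  exact cast_ne_zero h1 h2 (by
    have := congrArg (fun x => x - k) h
    simpa [add_sub_cancel_left, sub_self] using this)

lemma sub_cast_ne (k : Fin (2 * m + 1)) {j : ℕ} (h1 : 1 ≤ j) (h2 : j ≤ m) :
    k - (j : Fin (2 * m + 1)) ≠ k := by
  intro h
  exact cast_ne_zero h1 h2 (by
    have := congrArg (fun x => k - x) h
    simpa [sub_sub_cancel, sub_self] using this)

lemma cover (x : Fin (2 * m + 1)) (hx : x ≠ 0) :
    ∃ j, 1 ≤ j ∧ j ≤ m ∧ (x = ((j : ℕ) : Fin (2 * m + 1)) ∨ x = -((j : ℕ) : Fin (2 * m + 1))) := by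
  have hxv : x = ((x.val : ℕ) : Fin (2 * m + 1)) := by simp
  have hv0 : x.val ≠ 0 := fun h => hx (Fin.ext (by simpa using h))
  have hvlt : x.val < 2 * m + 1 := x.isLt
  by_cases hle : x.val ≤ m
  · exact ⟨x.val, by omega, hle, Or.inl hxv⟩
  · refine ⟨2 * m + 1 - x.val, by omega, by omega, Or.inr ?_⟩
    have hsum : ((x.val : ℕ) : Fin (2 * m + 1)) + ((2 * m + 1 - x.val : ℕ) : Fin (2 * m + 1)) = 0 := by
      rw [← Nat.cast_add]
      have : x.val + (2 * m + 1 - x.val) = 2 * m + 1 := by omega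
      rw [this]
      exact_mod_cast Fin.natCast_self (2 * m + 1)
    exact hxv.trans (neg_eq_of_add_eq_zero_left hsum).symm

lemma delta (α : ℝ) (k : Fin (2 * m + 1)) (s : Fin (2 * m + 1) → Bool) :
    Er α m (flip k s) - Er α m s
      = kacNorm α m * ∑ j ∈ Finset.Icc 1 m,
          eps α j * (-2 * (zs s k * zs s (k + (j : Fin (2 * m + 1)))
            + zs s (k - (j : Fin (2 * m + 1))) * zs s k)) := by
  unfold Er
  rw [← mul_sub]
  congr 1
  have hc : ∀ F : Fin (2 * m + 1) → ℕ → ℝ,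
      ∑ i : Fin (2 * m + 1), ∑ j ∈ Finset.Icc 1 m, F i j
        = ∑ j ∈ Finset.Icc 1 m, ∑ i : Fin (2 * m + 1), F i j := fun F => Finset.sum_comm
  rw [hc, hc, ← Finset.sum_sub_distrib]
  refine Finset.sum_congr rfl fun j hj => ?_
  rw [Finset.mem_Icc] at hj
  obtain ⟨hj1, hj2⟩ := hj
  rw [← Finset.sum_sub_distrib]
  have hju : (k + (j : Fin (2 * m + 1))) ≠ k := add_cast_ne k hj1 hj2
  have hjd : (k - (j : Fin (2 * m + 1))) ≠ k := sub_cast_ne k hj1 hj2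
  have hne : k ≠ k - (j : Fin (2 * m + 1)) := fun h => hjd h.symm
  have hsub : Finset.sum (Finset.univ : Finset (Fin (2 * m + 1)))
      (fun i => eps α j * (zs (flip k s) i * zs (flip k s) (i + (j : Fin (2 * m + 1))))
        - eps α j * (zs s i * zs s (i + (j : Fin (2 * m + 1)))))
      = ∑ i ∈ ({k, k - (j : Fin (2 * m + 1))} : Finset (Fin (2 * m + 1))), (fun i =>
          eps α j * (zs (flip k s) i * zs (flip k s) (i + (j : Fin (2 * m + 1))))
          - eps α j * (zs s i * zs s (i + (j : Fin (2 * m + 1))))) i := by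
    refine (Finset.sum_subset (Finset.subset_univ _) fun i _ hi => ?_).symm
    simp only [Finset.mem_insert, Finset.mem_singleton, not_or] at hi
    obtain ⟨hik, hikj⟩ := hi
    have h1 : zs (flip k s) i = zs s i := zs_flip_ne hik s
    have h2 : i + (j : Fin (2 * m + 1)) ≠ k := by
      intro h
      apply hikj
      rw [← h]; ring
    have h3 : zs (flip k s) (i + (j : Fin (2 * m + 1))) = zs s (i + (j : Fin (2 * m + 1))) :=
      zs_flip_ne h2 s
    rw [h1, h3, sub_self]
  rw [hsub, Finset.sum_pair hne]
  have e1 : k + (j : Fin (2 * m + 1)) ≠ k := hju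
  have e2 : k - (j : Fin (2 * m + 1)) + (j : Fin (2 * m + 1)) = k := by ring
  rw [zs_flip_self, zs_flip_ne e1, zs_flip_ne hjd, e2, zs_flip_self]
  ring

lemma sqrt2_sq : (((Real.sqrt 2)⁻¹ : ℝ) : ℂ) * (((Real.sqrt 2)⁻¹ : ℝ) : ℂ) = (2 : ℂ)⁻¹ := by
  rw [← Complex.ofReal_mul, ← mul_inv]
  norm_num [Real.mul_self_sqrt]

lemma U_flip_mul (k : Fin (2 * m + 1)) (s d : Fin (2 * m + 1) → Bool) :
    hadamardU m (flip k s) d * hadamardU m d s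
      = (2 : ℂ)⁻¹ ^ (2 * m + 1) * (if d k then -1 else 1) := by
  unfold hadamardU
  rw [← Finset.prod_mul_distrib]
  have key : ∀ i : Fin (2 * m + 1),
      ((((Real.sqrt 2)⁻¹ : ℝ) : ℂ) * (if (flip k s) i && d i then -1 else 1)) *
        ((((Real.sqrt 2)⁻¹ : ℝ) : ℂ) * (if d i && s i then -1 else 1))
      = (2 : ℂ)⁻¹ * (if i = k then (if d k then -1 else 1) else 1) := by
    intro i
    rcases eq_or_ne i k with h | h
    · subst h
      rw [flip_self]
      have : ∀ x y : ℂ, (((Real.sqrt 2)⁻¹ : ℝ) : ℂ) * x * ((((Real.sqrt 2)⁻¹ : ℝ) : ℂ) * y)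
          = (2:ℂ)⁻¹ * (x * y) := by
        intro x y; rw [← sqrt2_sq]; ring
      rw [this]
      cases hs : s i <;> cases hd : d i <;> simp
    · rw [flip_ne h]
      have : ∀ x y : ℂ, (((Real.sqrt 2)⁻¹ : ℝ) : ℂ) * x * ((((Real.sqrt 2)⁻¹ : ℝ) : ℂ) * y)
          = (2:ℂ)⁻¹ * (x * y) := by
        intro x y; rw [← sqrt2_sq]; ring
      rw [this]
      simp only [if_neg h]
      cases hs : s i <;> cases hd : d i <;> simp
  rw [Finset.prod_congr rfl (fun i _ => key i), Finset.prod_mul_distrib, Finset.prod_const,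
    Finset.card_univ, Fintype.card_fin, Finset.prod_ite_eq' Finset.univ k
      (fun _ => if d k then (-1:ℂ) else 1), if_pos (Finset.mem_univ k)]

lemma xor_cancel_right {a b c : Bool} (h : xor a c = xor b c) : a = b := by
  cases c <;> simpa using h

lemma sum_pi_bool : ∀ (n : ℕ) (g : Fin n → Bool → ℂ),
    ∑ u : Fin n → Bool, ∏ j, g j (u j) = ∏ j, (g j false + g j true) := by
  intro n
  induction n with
  | zero => intro g; simp
  | succ n ih =>
    intro g
    rw [← Fintype.sum_equiv (Fin.consEquiv (fun _ : Fin (n + 1) => Bool))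
      (fun p => ∏ j, g j ((Fin.consEquiv (fun _ : Fin (n + 1) => Bool)) p j))
      (fun u => ∏ j, g j (u j)) (fun p => rfl)]
    have : ∀ p : Bool × (Fin n → Bool),
        (∏ j, g j ((Fin.consEquiv (fun _ : Fin (n + 1) => Bool)) p j))
        = g 0 p.1 * ∏ j : Fin n, g j.succ (p.2 j) := by
      intro p
      rw [Fin.prod_univ_succ]
      simp [Fin.consEquiv]
    rw [Fintype.sum_congr _ _ this, Fintype.sum_prod_type]
    simp only [← Finset.sum_mul, ← Finset.mul_sum]
    rw [ih (fun j b => g j.succ b), Fin.prod_univ_succ]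
    rw [Fintype.sum_bool]
    ring

def psi (k : Fin (2 * m + 1)) (s : Fin (2 * m + 1) → Bool) :
    Bool × (Fin m → Bool) × (Fin m → Bool) :=
  (s k,
   fun j => xor (s (k + (((j : ℕ) + 1 : ℕ) : Fin (2 * m + 1)))) (s k),
   fun j => xor (s (k - (((j : ℕ) + 1 : ℕ) : Fin (2 * m + 1)))) (s k))

lemma psi_injective (k : Fin (2 * m + 1)) : Function.Injective (psi (m := m) k) := by
  intro s s' h
  have h1 : s k = s' k := congrArg Prod.fst h
  have hu := congrArg (fun p => p.2.1) h
  have hv := congrArg (fun p => p.2.2) h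
  simp only [psi] at hu hv
  funext i
  rcases eq_or_ne i k with rfl | hik
  · exact h1
  obtain ⟨j, hj1, hj2, hor⟩ := cover (i - k) (sub_ne_zero.mpr hik)
  have hjv : ((⟨j - 1, by omega⟩ : Fin m) : ℕ) + 1 = j := by simp; omega
  rcases hor with hx | hx
  · have hi : i = k + ((j : ℕ) : Fin (2 * m + 1)) := by rw [← hx]; ring
    have h2 := congrFun hu ⟨j - 1, by omega⟩
    simp only [hjv] at h2
    rw [← h1] at h2
    rw [hi]
    exact xor_cancel_right h2
  · have hi : i = k - ((j : ℕ) : Fin (2 * m + 1)) := by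
      have h' : i - (k - ((j : ℕ) : Fin (2 * m + 1))) = 0 := by
        have : i - (k - ((j : ℕ) : Fin (2 * m + 1))) = (i - k) - (-((j : ℕ) : Fin (2 * m + 1))) := by ring
        rw [this, hx]; ring
      have := sub_eq_zero.mp h'
      exact this
    have h2 := congrFun hv ⟨j - 1, by omega⟩
    simp only [hjv] at h2
    rw [← h1] at h2
    rw [hi]
    exact xor_cancel_right h2

lemma psi_bijective (k : Fin (2 * m + 1)) : Function.Bijective (psi (m := m) k) := by
  rw [Fintype.bijective_iff_injective_and_card]
  refine ⟨psi_injective k, ?_⟩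
  simp only [Fintype.card_fun, Fintype.card_prod, Fintype.card_bool, Fintype.card_fin]
  have : 2 * m + 1 = (m + m) + 1 := by ring
  rw [this, pow_succ, pow_add]
  ring

lemma Icc_map (n : ℕ) : Finset.Icc 1 n
    = Finset.map ⟨fun j => j + 1, fun a b h => by simpa using h⟩ (Finset.range n) := by
  ext x
  simp only [Finset.mem_Icc, Finset.mem_map, Finset.mem_range, Function.Embedding.coeFn_mk]
  constructor
  · intro ⟨h1, h2⟩; exact ⟨x - 1, by omega, by change x - 1 + 1 = x; omega⟩
  · intro ⟨a, h1, h2⟩; change a + 1 = x at h2; omega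

lemma prod_Icc_fin {M : Type*} [CommMonoid M] (n : ℕ) (F : ℕ → M) :
    ∏ j ∈ Finset.Icc 1 n, F j = ∏ j : Fin n, F ((j : ℕ) + 1) := by
  rw [Icc_map n, Finset.prod_map, Fin.prod_univ_eq_prod_range (fun j => F (j + 1)) n]
  rfl

lemma sum_Icc_fin {M : Type*} [AddCommMonoid M] (n : ℕ) (F : ℕ → M) :
    ∑ j ∈ Finset.Icc 1 n, F j = ∑ j : Fin n, F ((j : ℕ) + 1) := by
  rw [Icc_map n, Finset.sum_map, Fin.sum_univ_eq_sum_range (fun j => F (j + 1)) n]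
  rfl

lemma zs_mul_eq (s : Fin (2 * m + 1) → Bool) (a b : Fin (2 * m + 1)) :
    zs s a * zs s b = if xor (s b) (s a) then -1 else 1 := by
  simp only [zs]
  cases s a <;> cases s b <;> norm_num

lemma ofReal_sign (b : Bool) : (((if b then (-1:ℝ) else 1) : ℝ) : ℂ) = if b then -1 else 1 := by
  cases b <;> norm_num

/-- complex sign of a bit -/
def chiC (b : Bool) : ℂ := if b then -1 else 1

lemma core_sum (α t : ℝ) (k : Fin (2 * m + 1)) :
    ∑ s : Fin (2 * m + 1) → Bool,
        Complex.exp (Complex.I * (t : ℂ) * (((Er α m (flip k s) - Er α m s : ℝ)) : ℂ))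
      = (2 : ℂ) ^ (2 * m + 1)
        * ∏ j : Fin m,
            ((Real.cos (2 * t * kacNorm α m * eps α ((j : ℕ) + 1)) : ℝ) : ℂ) ^ 2 := by
  classical
  set c : Fin m → ℂ := fun j =>
    -2 * Complex.I * (t : ℂ) * (kacNorm α m : ℂ) * (eps α ((j : ℕ) + 1) : ℂ) with hc
  set G : Bool × (Fin m → Bool) × (Fin m → Bool) → ℂ := fun p =>
    ∏ j : Fin m, Complex.exp (c j * chiC (p.2.1 j)) * Complex.exp (c j * chiC (p.2.2 j)) with hG
  have step1 : ∀ s : Fin (2 * m + 1) → Bool,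
      Complex.exp (Complex.I * (t : ℂ) * (((Er α m (flip k s) - Er α m s : ℝ)) : ℂ))
        = G (psi k s) := by
    intro s
    have h1 : Complex.I * (t : ℂ) * (((Er α m (flip k s) - Er α m s : ℝ)) : ℂ)
        = ∑ j : Fin m,
            (c j * ((zs s k * zs s (k + (((j : ℕ) + 1 : ℕ) : Fin (2 * m + 1))) : ℝ) : ℂ)
             + c j * ((zs s (k - (((j : ℕ) + 1 : ℕ) : Fin (2 * m + 1))) * zs s k : ℝ) : ℂ)) := by
      rw [delta]
      rw [show (kacNorm α m * ∑ j ∈ Finset.Icc 1 m,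
          eps α j * (-2 * (zs s k * zs s (k + (j : Fin (2 * m + 1)))
            + zs s (k - (j : Fin (2 * m + 1))) * zs s k)) : ℝ)
        = ∑ j ∈ Finset.Icc 1 m, kacNorm α m *
            (eps α j * (-2 * (zs s k * zs s (k + (j : Fin (2 * m + 1)))
              + zs s (k - (j : Fin (2 * m + 1))) * zs s k))) from Finset.mul_sum _ _ _]
      rw [sum_Icc_fin m (fun j => kacNorm α m *
            (eps α j * (-2 * (zs s k * zs s (k + (j : Fin (2 * m + 1)))
              + zs s (k - (j : Fin (2 * m + 1))) * zs s k))))]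
      push_cast
      rw [Finset.mul_sum]
      refine Finset.sum_congr rfl fun j _ => ?_
      rw [hc]
      push_cast
      ring
    rw [h1, Complex.exp_sum]
    refine Finset.prod_congr rfl fun j _ => ?_
    rw [Complex.exp_add]
    congr 1
    · congr 1
      congr 1
      rw [zs_mul_eq]
      simp only [psi, chiC]
      exact ofReal_sign _
    · congr 1
      congr 1
      rw [zs_mul_eq, Bool.xor_comm]
      simp only [psi, chiC]
      exact ofReal_sign _
  rw [Finset.sum_congr rfl fun s _ => step1 s]
  rw [Fintype.sum_bijective (psi k) (psi_bijective k) _ G (fun s => rfl)]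
  have hfac : ∀ b : Bool, ∀ q : (Fin m → Bool) × (Fin m → Bool),
      G (b, q) = (∏ j : Fin m, Complex.exp (c j * chiC (q.1 j)))
               * (∏ j : Fin m, Complex.exp (c j * chiC (q.2 j))) := by
    intro b q
    rw [hG]
    exact Finset.prod_mul_distrib
  have hP : ∑ u : Fin m → Bool, ∏ j : Fin m, Complex.exp (c j * chiC (u j))
      = ∏ j : Fin m, (2 : ℂ) * ((Real.cos (2 * t * kacNorm α m * eps α ((j : ℕ) + 1)) : ℝ) : ℂ) := by
    rw [sum_pi_bool m (fun j b => Complex.exp (c j * chiC b))]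
    refine Finset.prod_congr rfl fun j _ => ?_
    have hcj : c j = ((-(2 * t * kacNorm α m * eps α ((j : ℕ) + 1)) : ℝ) : ℂ) * Complex.I := by
      rw [hc]; push_cast; ring
    rw [chiC, chiC, if_neg (by simp), if_pos rfl]
    rw [mul_one, hcj]
    rw [show ((-(2 * t * kacNorm α m * eps α ((j : ℕ) + 1)) : ℝ) : ℂ) * Complex.I * (-1)
        = -(((-(2 * t * kacNorm α m * eps α ((j : ℕ) + 1)) : ℝ) : ℂ) * Complex.I) from by ring]
    rw [show Complex.exp (((-(2 * t * kacNorm α m * eps α ((j : ℕ) + 1)) : ℝ) : ℂ) * Complex.I)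
          + Complex.exp (-(((-(2 * t * kacNorm α m * eps α ((j : ℕ) + 1)) : ℝ) : ℂ) * Complex.I))
        = 2 * Complex.cos ((-(2 * t * kacNorm α m * eps α ((j : ℕ) + 1)) : ℝ) : ℂ) from by
      rw [Complex.two_cos]; ring_nf]
    rw [Complex.ofReal_neg, Complex.cos_neg, ← Complex.ofReal_cos]
  rw [Fintype.sum_prod_type]
  have hq : ∀ b : Bool, (∑ q : (Fin m → Bool) × (Fin m → Bool), G (b, q))
      = (∏ j : Fin m, (2 : ℂ)
          * ((Real.cos (2 * t * kacNorm α m * eps α ((j : ℕ) + 1)) : ℝ) : ℂ)) ^ 2 := by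
    intro b
    rw [Finset.sum_congr rfl fun q _ => hfac b q, Fintype.sum_prod_type]
    simp only [← Finset.mul_sum]
    rw [← Finset.sum_mul, hP, sq]
  rw [Finset.sum_congr rfl fun b _ => hq b, Fintype.sum_bool]
  rw [Finset.prod_mul_distrib, Finset.prod_const, Finset.card_univ, Fintype.card_fin,
    Finset.prod_pow]
  ring


lemma UDU_apply (D : Matrix (Fin (2 * m + 1) → Bool) (Fin (2 * m + 1) → Bool) ℂ)
    (hD : D.IsDiag) (a b : Fin (2 * m + 1) → Bool) :
    (hadamardU m * D * hadamardU m) a b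
      = ∑ d : Fin (2 * m + 1) → Bool, hadamardU m a d * D d d * hadamardU m d b := by
  rw [Matrix.mul_apply]
  refine Finset.sum_congr rfl fun d _ => ?_
  congr 1
  rw [Matrix.mul_apply]
  refine Finset.sum_eq_single d (fun d' _ hne => ?_) (by simp)
  rw [hD hne, mul_zero]

lemma tr_piece (p q : (Fin (2 * m + 1) → Bool) → ℂ) (k : Fin (2 * m + 1))
    (R : Matrix (Fin (2 * m + 1) → Bool) (Fin (2 * m + 1) → Bool) ℂ) :
    Matrix.trace (Matrix.diagonal p * sigmaX m k * Matrix.diagonal q * R)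
      = ∑ s : Fin (2 * m + 1) → Bool, p s * q (flip k s) * R (flip k s) s := by
  rw [Matrix.trace]
  refine Finset.sum_congr rfl fun s _ => ?_
  rw [Matrix.diag_apply, Matrix.mul_apply]
  have : ∀ s' : Fin (2 * m + 1) → Bool,
      (Matrix.diagonal p * sigmaX m k * Matrix.diagonal q) s s' * R s' s
        = if s' = flip k s then p s * q (flip k s) * R (flip k s) s else 0 := by
    intro s'
    rw [Matrix.mul_diagonal, Matrix.diagonal_mul, sigmaX]
    rcases eq_or_ne s' (flip k s) with h | h
    · subst h
      simp only [flip, eq_self_iff_true, if_true]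
      ring
    · rw [if_neg h, if_neg (by exact h)]
      ring
  rw [Finset.sum_congr rfl fun s' _ => this s', Finset.sum_ite_eq' Finset.univ (flip k s),
    if_pos (Finset.mem_univ _)]

lemma trace_main (p q : (Fin (2 * m + 1) → Bool) → ℂ)
    (D : Matrix (Fin (2 * m + 1) → Bool) (Fin (2 * m + 1) → Bool) ℂ) (hD : D.IsDiag)
    (a : Fin (2 * m + 1) → ℝ) :
    Matrix.trace (Matrix.diagonal p *
        (∑ i : Fin (2 * m + 1), ((a i : ℝ) : ℂ) • sigmaX m i) * Matrix.diagonal q *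
        (hadamardU m * D * hadamardU m))
      = ∑ k : Fin (2 * m + 1), ((a k : ℝ) : ℂ) *
          ∑ d : Fin (2 * m + 1) → Bool, D d d *
            ((2 : ℂ)⁻¹ ^ (2 * m + 1) * (if d k then -1 else 1)
              * ∑ s : Fin (2 * m + 1) → Bool, p s * q (flip k s)) := by
  rw [Matrix.mul_sum, Matrix.sum_mul, Matrix.sum_mul, Matrix.trace_sum]
  refine Finset.sum_congr rfl fun k _ => ?_
  rw [Matrix.mul_smul, Matrix.smul_mul, Matrix.smul_mul, Matrix.trace_smul, smul_eq_mul]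
  congr 1
  rw [tr_piece]
  have h1 : ∀ s : Fin (2 * m + 1) → Bool,
      p s * q (flip k s) * (hadamardU m * D * hadamardU m) (flip k s) s
        = ∑ d : Fin (2 * m + 1) → Bool,
            D d d * ((2 : ℂ)⁻¹ ^ (2 * m + 1) * (if d k then -1 else 1) * (p s * q (flip k s))) := by
    intro s
    rw [UDU_apply D hD, Finset.mul_sum]
    refine Finset.sum_congr rfl fun d _ => ?_
    rw [show p s * q (flip k s) * (hadamardU m (flip k s) d * D d d * hadamardU m d s)
        = D d d * ((hadamardU m (flip k s) d * hadamardU m d s) * (p s * q (flip k s))) from by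
      ring, U_flip_mul]
  rw [Finset.sum_congr rfl fun s _ => h1 s, Finset.sum_comm]
  refine Finset.sum_congr rfl fun d _ => ?_
  rw [← Finset.mul_sum, ← Finset.mul_sum]

lemma key_identity (α t : ℝ) (D : Matrix (Fin (2 * m + 1) → Bool) (Fin (2 * m + 1) → Bool) ℂ)
    (hD : D.IsDiag) (a : Fin (2 * m + 1) → ℝ) :
    Matrix.trace
        (NormedSpace.exp ((-(Complex.I * (t : ℂ))) • Ham α 0 m) *
          (∑ i : Fin (2 * m + 1), ((a i : ℝ) : ℂ) • sigmaX m i) *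
          NormedSpace.exp ((Complex.I * (t : ℂ)) • Ham α 0 m) *
          (hadamardU m * D * hadamardU m))
      = ((∏ j : Fin m, (Real.cos (2 * t * kacNorm α m * eps α ((j : ℕ) + 1))) ^ 2 : ℝ) : ℂ)
        * Matrix.trace
            ((∑ i : Fin (2 * m + 1), ((a i : ℝ) : ℂ) • sigmaX m i) *
              (hadamardU m * D * hadamardU m)) := by
  classical
  have hA : (∑ i : Fin (2 * m + 1), ((a i : ℝ) : ℂ) • sigmaX m i) *
        (hadamardU m * D * hadamardU m)
      = Matrix.diagonal (fun _ => (1:ℂ)) *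
          (∑ i : Fin (2 * m + 1), ((a i : ℝ) : ℂ) • sigmaX m i) *
          Matrix.diagonal (fun _ => (1:ℂ)) * (hadamardU m * D * hadamardU m) := by
    rw [Matrix.diagonal_one, Matrix.one_mul, Matrix.mul_one]
  rw [exp_ham α m (-(Complex.I * (t : ℂ))), exp_ham α m (Complex.I * (t : ℂ)), hA,
    trace_main _ _ D hD a, trace_main _ _ D hD a]
  have hsum1 : ∀ k : Fin (2 * m + 1),
      (∑ s : Fin (2 * m + 1) → Bool, (1 : ℂ) * 1) = (2 : ℂ) ^ (2 * m + 1) := by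
    intro _
    rw [Finset.sum_const, Finset.card_univ, Fintype.card_fun, Fintype.card_bool,
      Fintype.card_fin, nsmul_eq_mul, mul_one]
    push_cast
    ring
  have hsum2 : ∀ k : Fin (2 * m + 1),
      (∑ s : Fin (2 * m + 1) → Bool,
          Complex.exp (-(Complex.I * (t : ℂ)) * ((Er α m s : ℝ) : ℂ))
            * Complex.exp ((Complex.I * (t : ℂ)) * ((Er α m (flip k s) : ℝ) : ℂ)))
        = (2 : ℂ) ^ (2 * m + 1)
          * ∏ j : Fin m,
              ((Real.cos (2 * t * kacNorm α m * eps α ((j : ℕ) + 1)) : ℝ) : ℂ) ^ 2 := by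
    intro k
    rw [← core_sum α t k]
    refine Finset.sum_congr rfl fun s _ => ?_
    rw [← Complex.exp_add]
    congr 1
    push_cast
    ring
  rw [Finset.mul_sum]
  refine Finset.sum_congr rfl fun k _ => ?_
  rw [hsum1 k, hsum2 k, Finset.mul_sum, Finset.mul_sum, Finset.mul_sum]
  refine Finset.sum_congr rfl fun d _ => ?_
  push_cast
  ring

lemma prod_one_sub_ge {ι : Type*} (s : Finset ι) (x : ι → ℝ)
    (h0 : ∀ i ∈ s, 0 ≤ x i) (h1 : ∀ i ∈ s, x i ≤ 1) :
    1 - ∑ i ∈ s, x i ≤ ∏ i ∈ s, (1 - x i) := by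
  induction s using Finset.cons_induction with
  | empty => simp
  | cons a s ha ih =>
    rw [Finset.prod_cons, Finset.sum_cons]
    have hx0 := h0 a (Finset.mem_cons_self a s)
    have hx1 := h1 a (Finset.mem_cons_self a s)
    have hrec := ih (fun i hi => h0 i (Finset.mem_cons_of_mem hi))
      (fun i hi => h1 i (Finset.mem_cons_of_mem hi))
    have hsum0 : 0 ≤ ∑ i ∈ s, x i :=
      Finset.sum_nonneg fun i hi => h0 i (Finset.mem_cons_of_mem hi)
    have hmul := mul_le_mul_of_nonneg_left hrec (by linarith : (0:ℝ) ≤ 1 - x a)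
    nlinarith [hmul]

lemma eps_pos {α : ℝ} {j : ℕ} (hj : 1 ≤ j) : 0 < eps α j :=
  Real.rpow_pos_of_pos (by exact_mod_cast hj) _

lemma eps_le_one {α : ℝ} (hα0 : 0 ≤ α) {j : ℕ} (hj : 1 ≤ j) : eps α j ≤ 1 :=
  Real.rpow_le_one_of_one_le_of_nonpos (by exact_mod_cast hj) (neg_nonpos.mpr hα0)

lemma S_pos {α : ℝ} (hm : 1 ≤ m) : 0 < ∑ j ∈ Finset.Icc 1 m, eps α j :=
  Finset.sum_pos (fun j hj => eps_pos (Finset.mem_Icc.mp hj).1)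
    ⟨1, Finset.mem_Icc.mpr ⟨le_refl 1, hm⟩⟩

lemma S_ge {α : ℝ} (hα0 : 0 ≤ α) (hm : 1 ≤ m) :
    (m : ℝ) ^ (1 - α) ≤ ∑ j ∈ Finset.Icc 1 m, eps α j := by
  have hm0 : (0:ℝ) < m := by exact_mod_cast hm
  have key : ∀ j ∈ Finset.Icc 1 m, (m:ℝ) ^ (-α) ≤ eps α j := by
    intro j hj
    obtain ⟨hj1, hj2⟩ := Finset.mem_Icc.mp hj
    have hj0 : (0:ℝ) < j := by exact_mod_cast hj1
    rw [eps, Real.rpow_neg hj0.le, Real.rpow_neg hm0.le]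
    have h1 : (j:ℝ) ^ α ≤ (m:ℝ) ^ α :=
      Real.rpow_le_rpow hj0.le (by exact_mod_cast hj2) hα0
    exact inv_anti₀ (Real.rpow_pos_of_pos hj0 α) h1
  calc (m:ℝ) ^ (1 - α) = (m:ℝ) * (m:ℝ) ^ (-α) := by
        rw [show (1 - α) = 1 + (-α) by ring, Real.rpow_add hm0, Real.rpow_one]
    _ = (Finset.Icc 1 m).card • ((m:ℝ) ^ (-α)) := by
        rw [Nat.card_Icc, nsmul_eq_mul]
        norm_num
    _ ≤ ∑ j ∈ Finset.Icc 1 m, eps α j := by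
        rw [← Finset.sum_const]
        exact Finset.sum_le_sum key

lemma cos_prod_le_one {α t : ℝ} :
    (∏ j : Fin m, (Real.cos (2 * t * kacNorm α m * eps α ((j : ℕ) + 1))) ^ 2) ≤ 1 :=
  Finset.prod_le_one (fun j _ => sq_nonneg _) (fun j _ => Real.cos_sq_le_one _)

lemma cos_prod_ge {α : ℝ} (hα0 : 0 ≤ α) (hm : 1 ≤ m) (t τ : ℝ) (ht : |t| ≤ τ) :
    1 - τ ^ 2 / (∑ j ∈ Finset.Icc 1 m, eps α j)
      ≤ ∏ j : Fin m, (Real.cos (2 * t * kacNorm α m * eps α ((j : ℕ) + 1))) ^ 2 := by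
  set S := ∑ j ∈ Finset.Icc 1 m, eps α j with hS
  have hSpos : 0 < S := S_pos hm
  set θ : Fin m → ℝ := fun j => 2 * t * kacNorm α m * eps α ((j : ℕ) + 1) with hθ
  have hW : 1 - ∑ j : Fin m, (Real.sin (θ j)) ^ 2 ≤ ∏ j : Fin m, (1 - (Real.sin (θ j)) ^ 2) :=
    prod_one_sub_ge Finset.univ _ (fun j _ => sq_nonneg _) (fun j _ => Real.sin_sq_le_one _)
  have hprod : ∏ j : Fin m, (1 - (Real.sin (θ j)) ^ 2)
      = ∏ j : Fin m, (Real.cos (θ j)) ^ 2 :=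
    Finset.prod_congr rfl fun j _ => (Real.cos_sq' (θ j)).symm
  have ht2 : t ^ 2 ≤ τ ^ 2 := by
    have h := mul_self_le_mul_self (abs_nonneg t) ht
    nlinarith [sq_abs t, h]
  have hterm : ∀ j : Fin m, (Real.sin (θ j)) ^ 2 ≤ 4 * τ ^ 2 * (kacNorm α m) ^ 2 * eps α ((j : ℕ) + 1) := by
    intro j
    refine le_trans (Real.sin_sq_le_sq) ?_
    have he1 : 0 < eps α ((j : ℕ) + 1) := eps_pos (by omega)
    have he2 : eps α ((j : ℕ) + 1) ≤ 1 := eps_le_one hα0 (by omega)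
    rw [hθ]
    simp only []
    calc (2 * t * kacNorm α m * eps α ((j : ℕ) + 1)) ^ 2
        = 4 * t ^ 2 * (kacNorm α m) ^ 2 * (eps α ((j : ℕ) + 1) * eps α ((j : ℕ) + 1)) := by ring
      _ ≤ 4 * t ^ 2 * (kacNorm α m) ^ 2 * (eps α ((j : ℕ) + 1) * 1) := by
          refine mul_le_mul_of_nonneg_left ?_ (by positivity)
          exact mul_le_mul_of_nonneg_left he2 he1.le
      _ = 4 * (kacNorm α m) ^ 2 * eps α ((j : ℕ) + 1) * t ^ 2 := by ring
      _ ≤ 4 * (kacNorm α m) ^ 2 * eps α ((j : ℕ) + 1) * τ ^ 2 := by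
          refine mul_le_mul_of_nonneg_left ht2 (by positivity)
      _ = 4 * τ ^ 2 * (kacNorm α m) ^ 2 * eps α ((j : ℕ) + 1) := by ring
  have hsum : ∑ j : Fin m, (Real.sin (θ j)) ^ 2 ≤ τ ^ 2 / S := by
    calc ∑ j : Fin m, (Real.sin (θ j)) ^ 2
        ≤ ∑ j : Fin m, 4 * τ ^ 2 * (kacNorm α m) ^ 2 * eps α ((j : ℕ) + 1) :=
          Finset.sum_le_sum fun j _ => hterm j
      _ = 4 * τ ^ 2 * (kacNorm α m) ^ 2 * S := by
          rw [← Finset.mul_sum, hS, sum_Icc_fin m (fun j => eps α j)]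
      _ = τ ^ 2 / S := by
          rw [kacNorm, ← hS]
          field_simp
          ring
  linarith [hW, hprod ▸ hW, hsum]

end ER

/-- Proposition 1: for `0 ≤ α < 1`, magnetic field `h = 0`, and every
`τ, δ, C > 0`, there is `n₀` such that for every odd `N = 2m+1 > n₀`, every diagonal `D` with
`ρ = U D U`, every observable `A = ∑_i a_i σ_i^x` with `|Tr(A ρ)| ≤ C`, and every `|t| ≤ τ`,
`|Tr(e^{−itH} A e^{itH} ρ) − Tr(A ρ)| < δ`. -/
theorem stmt_1 (α : ℝ) (hα0 : 0 ≤ α) (hα1 : α < 1) (τ δ C : ℝ)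
    (hτ : 0 < τ) (hδ : 0 < δ) (hC : 0 < C) :
    ∃ n₀ : ℕ, ∀ m : ℕ, 2 * m + 1 > n₀ →
      ∀ D : Matrix (Fin (2 * m + 1) → Bool) (Fin (2 * m + 1) → Bool) ℂ, D.IsDiag →
      ∀ a : Fin (2 * m + 1) → ℝ, ∀ t : ℝ, |t| ≤ τ →
      ‖(Matrix.trace
          ((∑ i : Fin (2 * m + 1), ((a i : ℝ) : ℂ) • sigmaX m i) *
            (hadamardU m * D * hadamardU m)))‖ ≤ C →
      ‖(Matrix.trace
          (NormedSpace.exp ((-(Complex.I * (t : ℂ))) • Ham α 0 m) *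
            (∑ i : Fin (2 * m + 1), ((a i : ℝ) : ℂ) • sigmaX m i) *
            NormedSpace.exp ((Complex.I * (t : ℂ)) • Ham α 0 m) *
            (hadamardU m * D * hadamardU m)) -
         Matrix.trace
          ((∑ i : Fin (2 * m + 1), ((a i : ℝ) : ℂ) • sigmaX m i) *
            (hadamardU m * D * hadamardU m)))‖ < δ := by
  classical
  obtain ⟨M, hM⟩ := exists_nat_gt (max 1 ((τ ^ 2 * C / δ) ^ ((1 - α)⁻¹)))
  refine ⟨2 * M + 1, ?_⟩
  intro m hm D hD a t ht hTr
  have hM1 : 1 < (M:ℝ) := lt_of_le_of_lt (le_max_left _ _) hM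
  have hM1' : 1 ≤ M := by exact_mod_cast hM1.le
  have hmM : M < m := by omega
  have hm1 : 1 ≤ m := by omega
  have hSpos : 0 < ∑ j ∈ Finset.Icc 1 m, eps α j := ER.S_pos hm1
  have hK0 : 0 < τ ^ 2 * C / δ := by positivity
  have hKm : τ ^ 2 * C / δ < (m : ℝ) ^ (1 - α) := by
    have h1 : (τ ^ 2 * C / δ) ^ ((1 - α)⁻¹) < (m : ℝ) := by
      calc (τ ^ 2 * C / δ) ^ ((1 - α)⁻¹) ≤ max 1 ((τ ^ 2 * C / δ) ^ ((1 - α)⁻¹)) :=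
            le_max_right _ _
        _ < M := hM
        _ < m := by exact_mod_cast hmM
    have h2 : ((τ ^ 2 * C / δ) ^ ((1 - α)⁻¹)) ^ (1 - α) < (m : ℝ) ^ (1 - α) :=
      Real.rpow_lt_rpow (Real.rpow_nonneg hK0.le _) h1 (by linarith)
    rwa [← Real.rpow_mul hK0.le, inv_mul_cancel₀ (by linarith : (1 : ℝ) - α ≠ 0),
      Real.rpow_one] at h2
  have hSK : τ ^ 2 * C / δ < ∑ j ∈ Finset.Icc 1 m, eps α j :=
    lt_of_lt_of_le hKm (ER.S_ge hα0 hm1)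
  rw [ER.key_identity α t D hD a]
  set T := Matrix.trace
      ((∑ i : Fin (2 * m + 1), ((a i : ℝ) : ℂ) • sigmaX m i) *
        (hadamardU m * D * hadamardU m)) with hT
  set F := ∏ j : Fin m, (Real.cos (2 * t * kacNorm α m * eps α ((j : ℕ) + 1))) ^ 2 with hF
  have hF1 : F ≤ 1 := ER.cos_prod_le_one
  have hF2 : 1 - τ ^ 2 / (∑ j ∈ Finset.Icc 1 m, eps α j) ≤ F := ER.cos_prod_ge hα0 hm1 t τ ht
  have habs : ‖(F : ℂ) * T - T‖ = |F - 1| * ‖T‖ := by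
    rw [show (F : ℂ) * T - T = ((F - 1 : ℝ) : ℂ) * T from by push_cast; ring, norm_mul,
      Complex.norm_real, Real.norm_eq_abs]
  rw [habs]
  have h3 : |F - 1| ≤ τ ^ 2 / (∑ j ∈ Finset.Icc 1 m, eps α j) := by
    rw [abs_of_nonpos (by linarith)]
    linarith
  calc |F - 1| * ‖T‖
      ≤ (τ ^ 2 / (∑ j ∈ Finset.Icc 1 m, eps α j)) * C :=
        mul_le_mul h3 hTr (norm_nonneg _)
          (div_nonneg (sq_nonneg τ) hSpos.le)
    _ < δ := by
        rw [div_mul_eq_mul_div, div_lt_iff₀ hSpos]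
        calc τ ^ 2 * C = (τ ^ 2 * C / δ) * δ := by field_simp
          _ < (∑ j ∈ Finset.Icc 1 m, eps α j) * δ := mul_lt_mul_of_pos_right hSK hδ
          _ = δ * (∑ j ∈ Finset.Icc 1 m, eps α j) := mul_comm _ _
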